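/- For every ordering ξ of the Pascal graph and every α ∈ (0,1), the set of infinite paths that coincide from some level onward with a path all of whose edges are ξ-minimal or with a path all of whose edges are ξ-maximal (in particular the set X'_ξ) has μ_α-measure zero. -/

import Mathlib

/-- Vertex reached after `n` moves: (number of `false` moves, number of `true` moves). -/
def vertexAt (γ : ℕ → Bool) (n : ℕ) : ℕ × ℕ :=
  (((Finset.range n).filter fun i => γ i = false).card,
   ((Finset.range n).filter fun i => γ i = true).card)

def childOf (v : ℕ × ℕ) (m : Bool) : ℕ × ℕ :=
  if m then (v.1, v.2 + 1) else (v.1 + 1, v.2)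

def MoveMin (ξ : ℕ × ℕ → Bool) (v : ℕ × ℕ) (m : Bool) : Prop :=
  (childOf v m).1 = 0 ∨ (childOf v m).2 = 0 ∨ m = !ξ (childOf v m)

def MoveMax (ξ : ℕ × ℕ → Bool) (v : ℕ × ℕ) (m : Bool) : Prop :=
  (childOf v m).1 = 0 ∨ (childOf v m).2 = 0 ∨ m = ξ (childOf v m)

def IsMinEdge (ξ : ℕ × ℕ → Bool) (γ : ℕ → Bool) (i : ℕ) : Prop :=
  MoveMin ξ (vertexAt γ i) (γ i)

def IsMaxEdge (ξ : ℕ × ℕ → Bool) (γ : ℕ → Bool) (i : ℕ) : Prop :=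
  MoveMax ξ (vertexAt γ i) (γ i)

def XMin (ξ : ℕ × ℕ → Bool) : Set (ℕ → Bool) := {γ | ∀ i, IsMinEdge ξ γ i}

def XMax (ξ : ℕ × ℕ → Bool) : Set (ℕ → Bool) := {γ | ∀ i, IsMaxEdge ξ γ i}

def XPrime (ξ : ℕ × ℕ → Bool) : Set (ℕ → Bool) :=
  {γ | ∃ δ ∈ XMin ξ ∪ XMax ξ, ∃ N : ℕ, ∀ n, N ≤ n → γ n = δ n}

/-- The all-ξ-minimal finite path (list of moves) from the root to a vertex. -/
def minPath (ξ : ℕ × ℕ → Bool) : ℕ × ℕ → List Bool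
  | (0, 0) => []
  | (x + 1, 0) => minPath ξ (x, 0) ++ [false]
  | (0, y + 1) => minPath ξ (0, y) ++ [true]
  | (x + 1, y + 1) =>
      if ξ (x + 1, y + 1) then minPath ξ (x, y + 1) ++ [false]
      else minPath ξ (x + 1, y) ++ [true]
  termination_by p => p.1 + p.2

/-- The all-ξ-maximal finite path (list of moves) from the root to a vertex. -/
def maxPath (ξ : ℕ × ℕ → Bool) : ℕ × ℕ → List Bool
  | (0, 0) => []
  | (x + 1, 0) => maxPath ξ (x, 0) ++ [false]
  | (0, y + 1) => maxPath ξ (0, y) ++ [true]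
  | (x + 1, y + 1) =>
      if ξ (x + 1, y + 1) then maxPath ξ (x + 1, y) ++ [true]
      else maxPath ξ (x, y + 1) ++ [false]
  termination_by p => p.1 + p.2

open Classical in
/-- The adic (Vershik) transformation determined by ξ (identity where undefined). -/
noncomputable def adicT (ξ : ℕ × ℕ → Bool) (γ : ℕ → Bool) : ℕ → Bool :=
  if h : ∃ i, ¬ IsMaxEdge ξ γ i then
    let i0 := Nat.find h
    let v := vertexAt γ (i0 + 1)
    let src : ℕ × ℕ := if ξ v then (v.1, v.2 - 1) else (v.1 - 1, v.2)
    fun n =>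
      if n < i0 then (minPath ξ src).getD n false
      else if n = i0 then ξ v
      else γ n
  else γ

open Classical in
/-- The inverse adic transformation determined by ξ (identity where undefined). -/
noncomputable def adicTInv (ξ : ℕ × ℕ → Bool) (γ : ℕ → Bool) : ℕ → Bool :=
  if h : ∃ i, ¬ IsMinEdge ξ γ i then
    let i0 := Nat.find h
    let v := vertexAt γ (i0 + 1)
    let src : ℕ × ℕ := if ξ v then (v.1 - 1, v.2) else (v.1, v.2 - 1)
    fun n =>
      if n < i0 then (maxPath ξ src).getD n false
      else if n = i0 then !ξ v
      else γ n
  else γ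

/-- ℤ-iterates of the adic transformation. -/
noncomputable def adicIter (ξ : ℕ × ℕ → Bool) : ℤ → (ℕ → Bool) → (ℕ → Bool)
  | Int.ofNat n, γ => (adicT ξ)^[n] γ
  | Int.negSucc n, γ => (adicTInv ξ)^[n + 1] γ

/-- The k-coding of the orbit of γ: symbols are the initial segments of length k. -/
noncomputable def omegaCode (ξ : ℕ × ℕ → Bool) (k : ℕ) (γ : ℕ → Bool) : ℤ → List Bool :=
  fun t => (List.range k).map (adicIter ξ t γ)

/-- Ordered list of all initial segments from the root to (x,y), in increasing ξ-order. -/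
def segList (ξ : ℕ × ℕ → Bool) : ℕ × ℕ → List (List Bool)
  | (0, 0) => [[]]
  | (x + 1, 0) => (segList ξ (x, 0)).map (· ++ [false])
  | (0, y + 1) => (segList ξ (0, y)).map (· ++ [true])
  | (x + 1, y + 1) =>
      if ξ (x + 1, y + 1) then
        (segList ξ (x, y + 1)).map (· ++ [false]) ++ (segList ξ (x + 1, y)).map (· ++ [true])
      else
        (segList ξ (x + 1, y)).map (· ++ [true]) ++ (segList ξ (x, y + 1)).map (· ++ [false])
  termination_by p => p.1 + p.2

/-- Level-k coded basic block at a vertex (x,y) with x+y ≥ k, a word over the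
alphabet of initial segments of length k. -/
def codedBlock (ξ : ℕ × ℕ → Bool) (k : ℕ) : ℕ × ℕ → List (List Bool)
  | (0, 0) => segList ξ (0, 0)
  | (x + 1, 0) => if x + 1 ≤ k then segList ξ (x + 1, 0) else [List.replicate k false]
  | (0, y + 1) => if y + 1 ≤ k then segList ξ (0, y + 1) else [List.replicate k true]
  | (x + 1, y + 1) =>
      if x + 1 + (y + 1) ≤ k then segList ξ (x + 1, y + 1)
      else if ξ (x + 1, y + 1) then codedBlock ξ k (x, y + 1) ++ codedBlock ξ k (x + 1, y)
      else codedBlock ξ k (x + 1, y) ++ codedBlock ξ k (x, y + 1)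
  termination_by p => p.1 + p.2

/-- Basic block over the alphabet {a,b}, with a = `false` and b = `true`. -/
def basicBlock (ξ : ℕ × ℕ → Bool) : ℕ × ℕ → List Bool
  | (0, 0) => []
  | (_ + 1, 0) => [false]
  | (0, _ + 1) => [true]
  | (x + 1, y + 1) =>
      if ξ (x + 1, y + 1) then basicBlock ξ (x, y + 1) ++ basicBlock ξ (x + 1, y)
      else basicBlock ξ (x + 1, y) ++ basicBlock ξ (x, y + 1)
  termination_by p => p.1 + p.2

/-- The finite word ω_s ω_{s+1} ... ω_{t-1}. -/
def wordAt (ω : ℤ → List Bool) (s t : ℤ) : List (List Bool) :=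
  (List.range (t - s).toNat).map fun u => ω (s + u)

/-- A ξ-consistent factoring scheme for ω ∈ 𝒫_k^ℤ: `cuts j` is the set of starting
positions of the blocks of the level-(k+j) factorization, and `vert j s` is the
vertex whose coded basic block is the block starting at the cut `s`. -/
def IsConsistentScheme (ξ : ℕ × ℕ → Bool) (k : ℕ) (ω : ℤ → List Bool)
    (cuts : ℕ → Set ℤ) (vert : ℕ → ℤ → ℕ × ℕ) : Prop :=
  (∀ j : ℕ, ∀ M : ℤ, ∃ s ∈ cuts j, s < M) ∧
  (∀ j : ℕ, ∀ M : ℤ, ∃ t ∈ cuts j, M < t) ∧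
  (∀ j : ℕ, ∀ s ∈ cuts j, ∀ t ∈ cuts j, s < t → (∀ u ∈ cuts j, ¬(s < u ∧ u < t)) →
      (vert j s).1 + (vert j s).2 = k + j ∧
      wordAt ω s t = codedBlock ξ k (vert j s)) ∧
  (∀ j : ℕ, cuts (j + 1) ⊆ cuts j) ∧
  (∀ j : ℕ, ∀ s ∈ cuts (j + 1), ∀ t ∈ cuts (j + 1), s < t →
      (∀ u ∈ cuts (j + 1), ¬(s < u ∧ u < t)) →
      ∀ x y : ℕ, vert (j + 1) s = (x + 1, y + 1) →
        ∃ m ∈ cuts j, s < m ∧ m < t ∧ (∀ u ∈ cuts j, s < u → u < t → u = m) ∧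
          (if ξ (x + 1, y + 1)
            then vert j s = (x, y + 1) ∧ vert j m = (x + 1, y)
            else vert j s = (x + 1, y) ∧ vert j m = (x, y + 1)))

/-- The natural factoring scheme of the k-coding of γ: a level-(k+j) block begins at
coordinate t exactly when T^t γ begins with an all-ξ-minimal path to its level-(k+j) vertex. -/
noncomputable def natCuts (ξ : ℕ × ℕ → Bool) (k : ℕ) (γ : ℕ → Bool) : ℕ → Set ℤ :=
  fun j => {t | ∀ i < k + j, IsMinEdge ξ (adicIter ξ t γ) i}

noncomputable def natVert (ξ : ℕ × ℕ → Bool) (k : ℕ) (γ : ℕ → Bool) : ℕ → ℤ → ℕ × ℕ :=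
  fun j t => vertexAt (adicIter ξ t γ) (k + j)

open Classical in
/-- The return time r_n of the Kink Lemma, where `g` is the move of γ leaving (i,j). -/
noncomputable def kinkReturn (ξ : ℕ × ℕ → Bool) (i j : ℕ) (g : Bool) : ℕ :=
  let n := i + j
  if MoveMax ξ (i, j) g ∧ MoveMin ξ (i, j) (!g) then n.choose j
  else if (MoveMin ξ (i, j) g ∧ MoveMin ξ (i, j) (!g) ∧ g = true) ∨
          (MoveMax ξ (i, j) g ∧ MoveMax ξ (i, j) (!g) ∧ g = false) then (n + 1).choose (j + 1)
  else if (MoveMin ξ (i, j) g ∧ MoveMin ξ (i, j) (!g) ∧ g = false) ∨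
          (MoveMax ξ (i, j) g ∧ MoveMax ξ (i, j) (!g) ∧ g = true) then (n + 1).choose j
  else (n + 1).choose j + n.choose (j + 1)

/-- Convert a length-k list of moves to a function `Fin k → Bool`. -/
def segFn (k : ℕ) (w : List Bool) : Fin k → Bool := fun idx => w.getD idx false

/-- The subshift Σ_k of the k-codings: sequences all of whose finite subblocks occur
in some level-k coded basic block. -/
def SigmaK (ξ : ℕ × ℕ → Bool) (k : ℕ) : Set (ℤ → (Fin k → Bool)) :=
  {ω | ∀ (s : ℤ) (l : ℕ), ∃ p : ℕ × ℕ,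
    ((List.range l).map fun u => ω (s + u)) <:+: (codedBlock ξ k p).map (segFn k)}

/-- The subshift Σ_ξ ⊆ {a,b}^ℤ of sequences all of whose finite subblocks occur in
some basic block B_ξ(x,y). -/
def SigmaXi (ξ : ℕ × ℕ → Bool) : Set (ℤ → Bool) :=
  {ω | ∀ (s : ℤ) (l : ℕ), ∃ p : ℕ × ℕ,
    ((List.range l).map fun u => ω (s + u)) <:+: basicBlock ξ p}

/-- The big subshift Σ: sequences all of whose finite subblocks occur in some basic
block B_ξ(x,y) for some ordering ξ. -/
def BigShift : Set (ℤ → Bool) :=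
  {ω | ∀ (s : ℤ) (l : ℕ), ∃ (ξ : ℕ × ℕ → Bool) (p : ℕ × ℕ),
    ((List.range l).map fun u => ω (s + u)) <:+: basicBlock ξ p}


/-! ### Auxiliary lemmas for stmt0 -/

lemma vertexAt_zero (γ : ℕ → Bool) : vertexAt γ 0 = (0, 0) := by
  simp [vertexAt]

lemma vertexAt_succ (γ : ℕ → Bool) (n : ℕ) :
    vertexAt γ (n + 1) = childOf (vertexAt γ n) (γ n) := by
  rcases hb : γ n with _ | _ <;>
    simp [vertexAt, childOf, Finset.range_add_one, Finset.filter_insert, hb]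

lemma minPath_child (ξ : ℕ × ℕ → Bool) {v : ℕ × ℕ} {m : Bool} (h : MoveMin ξ v m) :
    minPath ξ (childOf v m) = minPath ξ v ++ [m] := by
  obtain ⟨x, y⟩ := v
  rcases m with _ | _
  · -- m = false, child = (x+1, y)
    rcases y with _ | y
    · simp [childOf, minPath]
    · have hx : ξ (x + 1, y + 1) = true := by
        simpa [MoveMin, childOf] using h
      simp [childOf, minPath, hx]
  · rcases x with _ | x
    · simp [childOf, minPath]
    · have hx : ξ (x + 1, y + 1) = false := by
        simpa [MoveMin, childOf] using h
      simp [childOf, minPath, hx]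

lemma maxPath_child (ξ : ℕ × ℕ → Bool) {v : ℕ × ℕ} {m : Bool} (h : MoveMax ξ v m) :
    maxPath ξ (childOf v m) = maxPath ξ v ++ [m] := by
  obtain ⟨x, y⟩ := v
  rcases m with _ | _
  · rcases y with _ | y
    · simp [childOf, maxPath]
    · have hx : ξ (x + 1, y + 1) = false := by
        simpa [MoveMax, childOf] using h
      simp [childOf, maxPath, hx]
  · rcases x with _ | x
    · simp [childOf, maxPath]
    · have hx : ξ (x + 1, y + 1) = true := by
        simpa [MoveMax, childOf] using h
      simp [childOf, maxPath, hx]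

lemma xmin_prefix (ξ : ℕ × ℕ → Bool) {γ : ℕ → Bool} (hγ : γ ∈ XMin ξ) (n : ℕ) :
    (minPath ξ (vertexAt γ n)).length = n ∧
      ∀ i < n, γ i = (minPath ξ (vertexAt γ n)).getD i false := by
  induction n with
  | zero =>
    have h0 : minPath ξ (0, 0) = [] := by rw [minPath]
    rw [vertexAt_zero, h0]; simp
  | succ n ih =>
    have hmin : MoveMin ξ (vertexAt γ n) (γ n) := hγ n
    rw [vertexAt_succ, minPath_child ξ hmin]
    refine ⟨by simp [ih.1], ?_⟩
    intro i hi
    rcases lt_or_eq_of_le (Nat.lt_succ_iff.mp hi) with hlt | heq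
    · rw [List.getD_append _ _ _ _ (by rw [ih.1]; exact hlt)]
      exact ih.2 i hlt
    · subst heq
      rw [List.getD_append_right _ _ _ _ (by rw [ih.1])]
      simp [ih.1]

lemma xmax_prefix (ξ : ℕ × ℕ → Bool) {γ : ℕ → Bool} (hγ : γ ∈ XMax ξ) (n : ℕ) :
    (maxPath ξ (vertexAt γ n)).length = n ∧
      ∀ i < n, γ i = (maxPath ξ (vertexAt γ n)).getD i false := by
  induction n with
  | zero =>
    have h0 : maxPath ξ (0, 0) = [] := by rw [maxPath]
    rw [vertexAt_zero, h0]; simp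
  | succ n ih =>
    have hmax : MoveMax ξ (vertexAt γ n) (γ n) := hγ n
    rw [vertexAt_succ, maxPath_child ξ hmax]
    refine ⟨by simp [ih.1], ?_⟩
    intro i hi
    rcases lt_or_eq_of_le (Nat.lt_succ_iff.mp hi) with hlt | heq
    · rw [List.getD_append _ _ _ _ (by rw [ih.1]; exact hlt)]
      exact ih.2 i hlt
    · subst heq
      rw [List.getD_append_right _ _ _ _ (by rw [ih.1])]
      simp [ih.1]

lemma vertexAt_sum (γ : ℕ → Bool) (n : ℕ) :
    (vertexAt γ n).1 + (vertexAt γ n).2 = n := by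
  induction n with
  | zero => simp [vertexAt_zero]
  | succ n ih =>
    rw [vertexAt_succ]
    rcases γ n with _ | _ <;> simp [childOf] <;> omega

open MeasureTheory in
/-- Measure of a "middle cylinder": constraints only on coordinates in `[N, M)`. -/
lemma cyl_bound (α : ℝ) (hα0 : 0 < α) (hα1 : α < 1) (μ : Measure (ℕ → Bool))
    (hμ : ∀ (n : ℕ) (f : ℕ → Bool),
      μ {γ | ∀ i < n, γ i = f i} =
        ∏ i ∈ Finset.range n, ENNReal.ofReal (if f i then α else 1 - α))
    (M : ℕ) :
    ∀ (N : ℕ) (f : ℕ → Bool),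
      μ {γ | ∀ n, N ≤ n → n < M → γ n = f n} ≤
        ∏ i ∈ Finset.Ico N M, ENNReal.ofReal (if f i then α else 1 - α) := by
  have huniv : μ Set.univ = 1 := by
    have h := hμ 0 (fun _ => false)
    simpa using h
  intro N
  induction N with
  | zero =>
    intro f
    have hset : {γ : ℕ → Bool | ∀ n, 0 ≤ n → n < M → γ n = f n}
        = {γ : ℕ → Bool | ∀ i < M, γ i = f i} := by
      ext γ; simp
    rw [hset, hμ M f, Finset.range_eq_Ico]
  | succ N ih =>
    intro f
    by_cases hNM : N < M
    · have hsub : {γ : ℕ → Bool | ∀ n, N + 1 ≤ n → n < M → γ n = f n} ⊆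
          {γ : ℕ → Bool | ∀ n, N ≤ n → n < M → γ n = Function.update f N true n} ∪
          {γ : ℕ → Bool | ∀ n, N ≤ n → n < M → γ n = Function.update f N false n} := by
        intro γ hγ
        have hmem : ∀ b : Bool, γ N = b →
            γ ∈ {γ : ℕ → Bool | ∀ n, N ≤ n → n < M → γ n = Function.update f N b n} := by
          intro b hb n hNn hnM
          rcases eq_or_lt_of_le hNn with h | h
          · subst h; rw [Function.update_self]; exact hb
          · rw [Function.update_of_ne (by omega)]
            exact hγ n h hnM
        rcases hb : γ N with _ | _
        · exact Or.inr (hmem false hb)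
        · exact Or.inl (hmem true hb)
      have hins : Finset.Ico N M = insert N (Finset.Ico (N + 1) M) :=
        (Finset.insert_Ico_add_one_left_eq_Ico hNM).symm
      have hprod : ∀ b : Bool,
          (∏ i ∈ Finset.Ico N M,
              ENNReal.ofReal (if Function.update f N b i then α else 1 - α)) =
            ENNReal.ofReal (if b then α else 1 - α) *
              ∏ i ∈ Finset.Ico (N + 1) M, ENNReal.ofReal (if f i then α else 1 - α) := by
        intro b
        rw [hins, Finset.prod_insert (by simp), Function.update_self]
        congr 1
        refine Finset.prod_congr rfl fun i hi => ?_
        rw [Function.update_of_ne (by simp at hi; omega)]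
      calc μ {γ : ℕ → Bool | ∀ n, N + 1 ≤ n → n < M → γ n = f n}
          ≤ μ ({γ : ℕ → Bool | ∀ n, N ≤ n → n < M → γ n = Function.update f N true n} ∪
              {γ : ℕ → Bool | ∀ n, N ≤ n → n < M → γ n = Function.update f N false n}) :=
            measure_mono hsub
        _ ≤ μ {γ : ℕ → Bool | ∀ n, N ≤ n → n < M → γ n = Function.update f N true n} +
              μ {γ : ℕ → Bool | ∀ n, N ≤ n → n < M → γ n = Function.update f N false n} :=
            measure_union_le _ _
        _ ≤ (∏ i ∈ Finset.Ico N M,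
                ENNReal.ofReal (if Function.update f N true i then α else 1 - α)) +
              ∏ i ∈ Finset.Ico N M,
                ENNReal.ofReal (if Function.update f N false i then α else 1 - α) :=
            add_le_add (ih _) (ih _)
        _ = (ENNReal.ofReal α + ENNReal.ofReal (1 - α)) *
              ∏ i ∈ Finset.Ico (N + 1) M, ENNReal.ofReal (if f i then α else 1 - α) := by
            rw [hprod true, hprod false]; simp [add_mul]
        _ = ∏ i ∈ Finset.Ico (N + 1) M, ENNReal.ofReal (if f i then α else 1 - α) := by
            rw [← ENNReal.ofReal_add hα0.le (by linarith)]
            norm_num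
    · have hempty : Finset.Ico (N + 1) M = ∅ := Finset.Ico_eq_empty (by omega)
      rw [hempty, Finset.prod_empty]
      calc μ {γ : ℕ → Bool | ∀ n, N + 1 ≤ n → n < M → γ n = f n}
          ≤ μ Set.univ := measure_mono (Set.subset_univ _)
        _ = 1 := huniv

open MeasureTheory in
theorem stmt0 (ξ : ℕ × ℕ → Bool) (α : ℝ) (hα0 : 0 < α) (hα1 : α < 1)
    (μ : Measure (ℕ → Bool))
    (hμ : ∀ (n : ℕ) (f : ℕ → Bool),
      μ {γ | ∀ i < n, γ i = f i} =
        ∏ i ∈ Finset.range n, ENNReal.ofReal (if f i then α else 1 - α)) :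
    μ (XPrime ξ) = 0 := by
  classical
  set r : ℝ := max α (1 - α) with hr
  have hr0 : 0 ≤ r := le_max_of_le_left hα0.le
  have hr1 : r < 1 := max_lt hα1 (by linarith)
  set q : ENNReal := ENNReal.ofReal r with hq
  set A : ℕ → Set (ℕ → Bool) := fun N =>
    {γ | ∃ δ ∈ XMin ξ ∪ XMax ξ, ∀ n, N ≤ n → γ n = δ n} with hA
  have hXsub : XPrime ξ ⊆ ⋃ N : ℕ, A N := by
    rintro γ ⟨δ, hδ, N, hN⟩
    exact Set.mem_iUnion.2 ⟨N, δ, hδ, hN⟩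
  have hp_le : ∀ b : Bool, ENNReal.ofReal (if b then α else 1 - α) ≤ q := by
    intro b
    rcases b with _ | _
    · exact ENNReal.ofReal_le_ofReal (le_max_right _ _)
    · exact ENNReal.ofReal_le_ofReal (le_max_left _ _)
  have hAzero : ∀ N, μ (A N) = 0 := by
    intro N
    have key : ∀ m : ℕ, μ (A N) ≤ ((N + m + 1 : ℕ) : ENNReal) * (2 * q ^ m) := by
      intro m
      set M : ℕ := N + m with hM
      have hcov : A N ⊆ ⋃ x ∈ Finset.range (M + 1),
          ({γ : ℕ → Bool | ∀ n, N ≤ n → n < M →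
              γ n = (minPath ξ (x, M - x)).getD n false} ∪
           {γ : ℕ → Bool | ∀ n, N ≤ n → n < M →
              γ n = (maxPath ξ (x, M - x)).getD n false}) := by
        rintro γ ⟨δ, hδ, hfrom⟩
        have hsum := vertexAt_sum δ M
        have hx : (vertexAt δ M).1 ≤ M := by omega
        have hv : ((vertexAt δ M).1, M - (vertexAt δ M).1) = vertexAt δ M := by
          have : M - (vertexAt δ M).1 = (vertexAt δ M).2 := by omega
          rw [this]
        refine Set.mem_biUnion (Finset.mem_range.2 (Nat.lt_succ_of_le hx)) ?_
        rcases hδ with hδ | hδ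
        · left
          intro n hNn hnM
          rw [hfrom n hNn, hv]
          exact (xmin_prefix ξ hδ M).2 n hnM
        · right
          intro n hNn hnM
          rw [hfrom n hNn, hv]
          exact (xmax_prefix ξ hδ M).2 n hnM
      have hcylmin : ∀ x : ℕ,
          μ {γ : ℕ → Bool | ∀ n, N ≤ n → n < M →
              γ n = (minPath ξ (x, M - x)).getD n false} ≤ q ^ m := by
        intro x
        refine (cyl_bound α hα0 hα1 μ hμ M N _).trans ?_
        calc (∏ i ∈ Finset.Ico N M,
                ENNReal.ofReal (if (minPath ξ (x, M - x)).getD i false then α else 1 - α))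
            ≤ q ^ (Finset.Ico N M).card :=
              Finset.prod_le_pow_card _ _ _ (fun i _ => hp_le _)
          _ = q ^ m := by rw [Nat.card_Ico]; congr 1; omega
      have hcylmax : ∀ x : ℕ,
          μ {γ : ℕ → Bool | ∀ n, N ≤ n → n < M →
              γ n = (maxPath ξ (x, M - x)).getD n false} ≤ q ^ m := by
        intro x
        refine (cyl_bound α hα0 hα1 μ hμ M N _).trans ?_
        calc (∏ i ∈ Finset.Ico N M,
                ENNReal.ofReal (if (maxPath ξ (x, M - x)).getD i false then α else 1 - α))
            ≤ q ^ (Finset.Ico N M).card :=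
              Finset.prod_le_pow_card _ _ _ (fun i _ => hp_le _)
          _ = q ^ m := by rw [Nat.card_Ico]; congr 1; omega
      calc μ (A N) ≤ μ (⋃ x ∈ Finset.range (M + 1),
              ({γ : ℕ → Bool | ∀ n, N ≤ n → n < M →
                  γ n = (minPath ξ (x, M - x)).getD n false} ∪
               {γ : ℕ → Bool | ∀ n, N ≤ n → n < M →
                  γ n = (maxPath ξ (x, M - x)).getD n false})) := measure_mono hcov
        _ ≤ ∑ x ∈ Finset.range (M + 1),
              μ ({γ : ℕ → Bool | ∀ n, N ≤ n → n < M →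
                  γ n = (minPath ξ (x, M - x)).getD n false} ∪
                 {γ : ℕ → Bool | ∀ n, N ≤ n → n < M →
                  γ n = (maxPath ξ (x, M - x)).getD n false}) :=
            measure_biUnion_finset_le _ _
        _ ≤ ∑ _x ∈ Finset.range (M + 1), (q ^ m + q ^ m) := by
            refine Finset.sum_le_sum fun x _ => ?_
            exact (measure_union_le _ _).trans (add_le_add (hcylmin x) (hcylmax x))
        _ = ((N + m + 1 : ℕ) : ENNReal) * (2 * q ^ m) := by
            rw [Finset.sum_const, Finset.card_range, nsmul_eq_mul]
            ring
    -- the bound tends to 0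
    have hpow : Filter.Tendsto (fun m : ℕ => r ^ m) Filter.atTop (nhds 0) :=
      tendsto_pow_atTop_nhds_zero_of_lt_one hr0 hr1
    have hmul : Filter.Tendsto (fun m : ℕ => (m : ℝ) * r ^ m) Filter.atTop (nhds 0) := by
      have hs : Summable (fun m : ℕ => (m : ℝ) ^ 1 * r ^ m) :=
        summable_pow_mul_geometric_of_norm_lt_one 1
          (by rwa [Real.norm_eq_abs, abs_of_nonneg hr0])
      simpa using hs.tendsto_atTop_zero
    have hg : Filter.Tendsto (fun m : ℕ => ((N : ℝ) + m + 1) * (2 * r ^ m))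
        Filter.atTop (nhds 0) := by
      have heq : (fun m : ℕ => ((N : ℝ) + m + 1) * (2 * r ^ m)) =
          (fun m : ℕ => 2 * ((m : ℝ) * r ^ m) + (2 * ((N : ℝ) + 1)) * r ^ m) := by
        funext m; ring
      rw [heq]
      have := (hmul.const_mul 2).add (hpow.const_mul (2 * ((N : ℝ) + 1)))
      simpa using this
    have hgENN : Filter.Tendsto
        (fun m : ℕ => ((N + m + 1 : ℕ) : ENNReal) * (2 * q ^ m)) Filter.atTop (nhds 0) := by
      have heq : (fun m : ℕ => ((N + m + 1 : ℕ) : ENNReal) * (2 * q ^ m)) =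
          (fun m : ℕ => ENNReal.ofReal (((N : ℝ) + m + 1) * (2 * r ^ m))) := by
        funext m
        rw [ENNReal.ofReal_mul (by positivity), ENNReal.ofReal_mul (by norm_num),
          ENNReal.ofReal_pow hr0]
        congr 1
        · rw [show ((N : ℝ) + m + 1) = ((N + m + 1 : ℕ) : ℝ) by push_cast; ring,
            ENNReal.ofReal_natCast]
        · norm_num [hq]
      rw [heq]
      have := (ENNReal.continuous_ofReal.tendsto 0).comp hg
      simpa using (by exact this : Filter.Tendsto (fun m : ℕ => ENNReal.ofReal (((N : ℝ) + m + 1) * (2 * r ^ m))) Filter.atTop (nhds (ENNReal.ofReal 0)))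
    have hle : μ (A N) ≤ 0 := ge_of_tendsto' hgENN key
    exact le_antisymm hle zero_le
  exact le_antisymm
    ((measure_mono hXsub).trans (le_of_eq (measure_iUnion_null hAzero))) zero_le
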